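/- arXiv:1507.01244 — 3 statements merged into one kernel-verified Lean document; each statement's English description precedes it below -/
import Mathlib

section
/- For a finite Markov chain with stationary distribution μ (with μ strictly positive), the relative entropy of the time-evolved measure with respect to μ is nonincreasing in time: for any probability measure ν and any stochastic matrix P with μP = μ, H(νP | μ) ≤ H(ν | μ), where H(ν|μ) = ∑_x ν(x) log(ν(x)/μ(x)). -/
open Finset

lemma relEntropy_col {S : Type*} [Fintype S]
    (P : S → S → ℝ) (hP_nonneg : ∀ x y, 0 ≤ P x y)
    (μ : S → ℝ) (hμ_pos : ∀ x, 0 < μ x)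
    (ν : S → ℝ) (hν_nonneg : ∀ x, 0 ≤ ν x) (y : S)
    (hcol : ∑ x, μ x * P x y = μ y) :
    (∑ x, ν x * P x y) * Real.log ((∑ x, ν x * P x y) / μ y) ≤
      ∑ x, ν x * P x y * Real.log (ν x / μ x) := by
  set m := μ y with hm
  have hm_pos : 0 < m := hμ_pos y
  set w : S → ℝ := fun x => μ x * P x y / m with hw
  set p : S → ℝ := fun x => ν x / μ x with hp
  have hw0 : ∀ x ∈ Finset.univ, 0 ≤ w x := fun x _ =>
    div_nonneg (mul_nonneg (hμ_pos x).le (hP_nonneg x y)) hm_pos.le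
  have hw1 : ∑ x, w x = 1 := by
    rw [← Finset.sum_div, hcol, div_self hm_pos.ne']
  have hmem : ∀ x ∈ Finset.univ, p x ∈ Set.Ici (0 : ℝ) := fun x _ =>
    div_nonneg (hν_nonneg x) (hμ_pos x).le
  have hJ := Real.concaveOn_negMulLog.le_map_sum hw0 hw1 hmem
  have hwp : ∀ x, w x • p x = ν x * P x y / m := by
    intro x
    have ha : μ x ≠ 0 := (hμ_pos x).ne'
    have hb : m ≠ 0 := hm_pos.ne'
    simp only [hw, hp, smul_eq_mul]
    field_simp
  have hsum : ∑ x, w x • p x = (∑ x, ν x * P x y) / m := by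
    simp only [hwp, ← Finset.sum_div]
  have hwf : ∀ x, w x • Real.negMulLog (p x) =
      -(ν x * P x y * Real.log (ν x / μ x)) / m := by
    intro x
    have ha : μ x ≠ 0 := (hμ_pos x).ne'
    have hb : m ≠ 0 := hm_pos.ne'
    simp only [hw, hp, smul_eq_mul, Real.negMulLog]
    field_simp
  rw [hsum] at hJ
  simp only [hwf] at hJ
  rw [Real.negMulLog, ← Finset.sum_div] at hJ
  set t := ∑ x, ν x * P x y with ht
  have h2 := mul_le_mul_of_nonneg_right hJ hm_pos.le
  rw [div_mul_cancel₀ _ hm_pos.ne'] at h2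
  have he : -(t / m) * Real.log (t / m) * m = -(t * Real.log (t / m)) := by
    field_simp
  rw [he, Finset.sum_neg_distrib] at h2
  linarith

/-- Relative entropy to a stationary measure is nonincreasing under a stochastic matrix. -/
theorem relEntropy_nonincreasing {S : Type*} [Fintype S]
    (P : S → S → ℝ) (hP_nonneg : ∀ x y, 0 ≤ P x y) (hP_row : ∀ x, ∑ y, P x y = 1)
    (μ : S → ℝ) (hμ_pos : ∀ x, 0 < μ x) (hμ_sum : ∑ x, μ x = 1)
    (hμ_stat : ∀ y, ∑ x, μ x * P x y = μ y)
    (ν : S → ℝ) (hν_nonneg : ∀ x, 0 ≤ ν x) (hν_sum : ∑ x, ν x = 1) :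
    ∑ y, (∑ x, ν x * P x y) * Real.log ((∑ x, ν x * P x y) / μ y) ≤
      ∑ x, ν x * Real.log (ν x / μ x) := by
  calc ∑ y, (∑ x, ν x * P x y) * Real.log ((∑ x, ν x * P x y) / μ y)
      ≤ ∑ y, ∑ x, ν x * P x y * Real.log (ν x / μ x) :=
        Finset.sum_le_sum fun y _ =>
          relEntropy_col P hP_nonneg μ hμ_pos ν hν_nonneg y (hμ_stat y)
    _ = ∑ x, ν x * Real.log (ν x / μ x) := by
        rw [Finset.sum_comm]
        refine Finset.sum_congr rfl fun x _ => ?_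
        calc ∑ yy, ν x * P x yy * Real.log (ν x / μ x)
            = ∑ yy, ν x * Real.log (ν x / μ x) * P x yy :=
              Finset.sum_congr rfl fun yy _ => by ring
          _ = ν x * Real.log (ν x / μ x) * ∑ yy, P x yy := by rw [Finset.mul_sum]
          _ = ν x * Real.log (ν x / μ x) := by rw [hP_row, mul_one]
end

section
/- Let (a_n)_{n∈ℕ} be a sequence of nonpositive real numbers satisfying a_n ≤ 2^d · a_{n-1} for all n ≥ 1 (d a fixed positive integer), and let G(n) = ∏_{l=n}^∞ ((2^{l+2}-2)^d / (2^{l+2}-1)^d). Then the sequence n ↦ G(n)·a_n/(2^{n+1}-1)^d is nonincreasing, and hence converges in [-∞, 0]. -/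
open Filter

private lemma two_le_pow2 (m : ℕ) (hm : 2 ≤ m) : (4 : ℝ) ≤ 2 ^ m := by
  calc (4:ℝ) = 2 ^ 2 := by norm_num
  _ ≤ 2 ^ m := by
    apply pow_le_pow_right₀ (by norm_num) hm

private noncomputable def fa (d n l : ℕ) : ℝ :=
  ((2 : ℝ) ^ (n + l + 2) - 2) ^ d / ((2 : ℝ) ^ (n + l + 2) - 1) ^ d

private lemma fa_pos (d n l : ℕ) : 0 < fa d n l := by
  have h4 : (4 : ℝ) ≤ 2 ^ (n + l + 2) := two_le_pow2 _ (by omega)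
  have hnum : (0 : ℝ) < 2 ^ (n + l + 2) - 2 := by linarith
  have hden : (0 : ℝ) < 2 ^ (n + l + 2) - 1 := by linarith
  unfold fa
  positivity

private lemma summable_logs (d n : ℕ) :
    Summable fun l : ℕ => Real.log (fa d n l) := by
  rw [← summable_neg_iff]
  have key : ∀ l : ℕ, -Real.log (fa d n l) ≤ (d : ℝ) * (1/2) ^ l := by
    intro l
    have h4 : (4 : ℝ) ≤ 2 ^ (n + l + 2) := two_le_pow2 _ (by omega)
    have hnum : (0 : ℝ) < 2 ^ (n + l + 2) - 2 := by linarith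
    have hden : (0 : ℝ) < 2 ^ (n + l + 2) - 1 := by linarith
    have hx : (0 : ℝ) < ((2 : ℝ) ^ (n + l + 2) - 2) / ((2 : ℝ) ^ (n + l + 2) - 1) :=
      div_pos hnum hden
    unfold fa
    rw [← div_pow, Real.log_pow]
    have hlog := Real.one_sub_inv_le_log_of_pos hx
    have hinv : (((2 : ℝ) ^ (n + l + 2) - 2) / ((2 : ℝ) ^ (n + l + 2) - 1))⁻¹
        = ((2 : ℝ) ^ (n + l + 2) - 1) / ((2 : ℝ) ^ (n + l + 2) - 2) := by
      rw [inv_div]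
    have hbound : (((2 : ℝ) ^ (n + l + 2) - 2) / ((2 : ℝ) ^ (n + l + 2) - 1))⁻¹ - 1
        ≤ (1/2) ^ l := by
      rw [hinv, div_sub_one hnum.ne']
      have h1 : (2 : ℝ) ^ (n + l + 2) - 1 - ((2 : ℝ) ^ (n + l + 2) - 2) = 1 := by ring
      rw [h1, div_le_iff₀ hnum]
      have h2l : (2 : ℝ) ^ l * 2 ≤ 2 ^ (n + l + 2) - 2 := by
        have hle : (2:ℝ) ^ (l + 2) ≤ 2 ^ (n + l + 2) :=
          pow_le_pow_right₀ (by norm_num) (by omega)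
        have hone : (1:ℝ) ≤ 2 ^ l := one_le_pow₀ (by norm_num : (1:ℝ) ≤ 2)
        have : (2:ℝ) ^ (l + 2) = 2 ^ l * 4 := by rw [pow_add]; ring
        nlinarith
      have hone : (1:ℝ) ≤ 2 ^ l := one_le_pow₀ (by norm_num : (1:ℝ) ≤ 2)
      have hh : ((1:ℝ)/2) ^ l = (2 ^ l)⁻¹ := by rw [one_div, inv_pow]
      rw [hh, inv_mul_eq_div, le_div_iff₀ (by positivity : (0:ℝ) < 2 ^ l)]
      nlinarith
    calc -((d:ℝ) * Real.log (((2 : ℝ) ^ (n + l + 2) - 2) / ((2 : ℝ) ^ (n + l + 2) - 1)))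
        = (d:ℝ) * (-Real.log (((2 : ℝ) ^ (n + l + 2) - 2) / ((2 : ℝ) ^ (n + l + 2) - 1))) := by
          ring
    _ ≤ (d:ℝ) * ((((2 : ℝ) ^ (n + l + 2) - 2) / ((2 : ℝ) ^ (n + l + 2) - 1))⁻¹ - 1) := by
        apply mul_le_mul_of_nonneg_left _ (Nat.cast_nonneg d)
        linarith
    _ ≤ (d : ℝ) * (1/2) ^ l :=
        mul_le_mul_of_nonneg_left hbound (Nat.cast_nonneg d)
  have hnonneg : ∀ l : ℕ, 0 ≤ -Real.log (fa d n l) := by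
    intro l
    have h4 : (4 : ℝ) ≤ 2 ^ (n + l + 2) := two_le_pow2 _ (by omega)
    have hnum : (0 : ℝ) < 2 ^ (n + l + 2) - 2 := by linarith
    have hden : (0 : ℝ) < 2 ^ (n + l + 2) - 1 := by linarith
    rw [neg_nonneg]
    unfold fa
    apply Real.log_nonpos (by positivity)
    apply div_le_one_of_le₀
    · apply pow_le_pow_left₀ hnum.le (by linarith)
    · positivity
  apply Summable.of_nonneg_of_le hnonneg key
  exact (summable_geometric_of_lt_one (by norm_num) (by norm_num)).mul_left _

private lemma hasProd_fa (d n : ℕ) :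
    HasProd (fa d n) (Real.exp (∑' l : ℕ, Real.log (fa d n l))) := by
  apply ((summable_logs d n).hasSum.rexp).congr
  intro l
  exact congrArg _ (funext fun x => Real.exp_log (fa_pos d n x))

private lemma tprod_fa_pos (d n : ℕ) : 0 < ∏' l : ℕ, fa d n l := by
  rw [(hasProd_fa d n).tprod_eq]
  exact Real.exp_pos _

set_option maxHeartbeats 1000000 in
private lemma tprod_fa_shift (d n : ℕ) :
    (∏' l : ℕ, fa d n l) = fa d n 0 * ∏' l : ℕ, fa d (n + 1) l := by
  have hfe : (fun l => fa d n (l + 1)) = fa d (n + 1) := funext fun l => by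
    simp only [fa, show n + (l + 1) + 2 = n + 1 + l + 2 from by omega]
  have hm1 : Multipliable (fun l => fa d n (l + 1)) := by
    rw [hfe]; exact ⟨_, hasProd_fa d (n + 1)⟩
  rw [tprod_eq_zero_mul' hm1]
  congr 1
  rw [hfe]

set_option maxHeartbeats 1000000 in
/-- Monotonicity and convergence (in the extended reals) of the normalized sequence
`G(n)·a_n/(2^{n+1}-1)^d` where `a_n ≤ 0`, `a_n ≤ 2^d a_{n-1}` and
`G(n) = ∏_{l=n}^∞ ((2^{l+2}-2)^d/(2^{l+2}-1)^d)`. -/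
theorem normalized_entropy_sequence_antitone (d : ℕ) (hd : 1 ≤ d)
    (a : ℕ → ℝ) (ha_nonpos : ∀ n, a n ≤ 0)
    (ha_step : ∀ n, a (n + 1) ≤ 2 ^ d * a n)
    (G : ℕ → ℝ)
    (hG : ∀ n, G n = ∏' l : ℕ,
      (((2 : ℝ) ^ (n + l + 2) - 2) ^ d / ((2 : ℝ) ^ (n + l + 2) - 1) ^ d)) :
    Antitone (fun n => G n * a n / ((2 : ℝ) ^ (n + 1) - 1) ^ d) ∧
      ∃ L : EReal, L ≤ 0 ∧
        Tendsto (fun n => ((G n * a n / ((2 : ℝ) ^ (n + 1) - 1) ^ d : ℝ) : EReal))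
          atTop (nhds L) := by
  have hG' : ∀ n, G n = ∏' l : ℕ, fa d n l := fun n => hG n
  have hGpos : ∀ n, 0 < G n := fun n => (hG' n) ▸ tprod_fa_pos d n
  have hshift : ∀ n, G n = fa d n 0 * G (n + 1) := by
    intro n
    rw [hG' n, hG' (n + 1)]
    exact tprod_fa_shift d n
  have hkey : ∀ n, G n * a n / ((2 : ℝ) ^ (n + 1) - 1) ^ d
      = G (n + 1) * (2 ^ d * a n) / ((2 : ℝ) ^ (n + 2) - 1) ^ d := by
    intro n
    rw [hshift n]
    have h4 : (4 : ℝ) ≤ 2 ^ (n + 2) := two_le_pow2 _ (by omega)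
    have hnum : (0 : ℝ) < 2 ^ (n + 2) - 2 := by linarith
    have hden : (0 : ℝ) < 2 ^ (n + 2) - 1 := by linarith
    have hd1 : (0 : ℝ) < 2 ^ (n + 1) - 1 := by
      have h2 : (2:ℝ) ^ 1 ≤ 2 ^ (n+1) := pow_le_pow_right₀ (by norm_num) (by omega)
      norm_num at h2; linarith
    have hfact : ((2 : ℝ) ^ (n + 0 + 2) - 2) ^ d = 2 ^ d * ((2:ℝ) ^ (n + 1) - 1) ^ d := by
      rw [← mul_pow]
      congr 1
      have h2 : (2:ℝ) ^ (n + 0 + 2) = 2 * 2 ^ (n + 1) := by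
        rw [← pow_succ']
      rw [h2]; ring
    have hexp : n + 0 + 2 = n + 2 := rfl
    unfold fa
    rw [hfact, hexp]
    field_simp
  have hanti : Antitone (fun n => G n * a n / ((2 : ℝ) ^ (n + 1) - 1) ^ d) := by
    apply antitone_nat_of_succ_le
    intro n
    rw [hkey n]
    have h4 : (4 : ℝ) ≤ 2 ^ (n + 2) := two_le_pow2 _ (by omega)
    have hden : (0 : ℝ) < ((2:ℝ) ^ (n + 2) - 1) ^ d := by
      have : (0:ℝ) < 2 ^ (n + 2) - 1 := by linarith
      positivity
    have hnum : G (n + 1) * a (n + 1) ≤ G (n + 1) * (2 ^ d * a n) :=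
      mul_le_mul_of_nonneg_left (ha_step n) (hGpos (n+1)).le
    have he : n + 1 + 1 = n + 2 := rfl
    rw [he]
    exact div_le_div_of_nonneg_right hnum hden.le
  refine ⟨hanti, ?_⟩
  refine ⟨⨅ n, ((G n * a n / ((2 : ℝ) ^ (n + 1) - 1) ^ d : ℝ) : EReal), ?_, ?_⟩
  · have h0 : G 0 * a 0 / ((2 : ℝ) ^ (0 + 1) - 1) ^ d ≤ 0 := by
      apply div_nonpos_of_nonpos_of_nonneg
      · exact mul_nonpos_of_nonneg_of_nonpos (hGpos 0).le (ha_nonpos 0)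
      · norm_num
    calc (⨅ n, ((G n * a n / ((2 : ℝ) ^ (n + 1) - 1) ^ d : ℝ) : EReal))
        ≤ ((G 0 * a 0 / ((2 : ℝ) ^ (0 + 1) - 1) ^ d : ℝ) : EReal) := iInf_le _ 0
    _ ≤ (0 : EReal) := by exact_mod_cast h0
  · apply tendsto_atTop_iInf
    intro m n hmn
    exact EReal.coe_le_coe_iff.mpr (hanti hmn)
end

section
/- Entropy loss is nonpositive for a finite-state continuous-time Markov chain at its stationary measure: let Q be a generator matrix on a finite state space S (Q(x,y) ≥ 0 for x ≠ y, ∑_y Q(x,y) = 0) with strictly positive stationary distribution μ (∑_x μ(x) Q(x,y) = 0 for all y). Then for every probability vector ν, d/dt|_{t=0} H(ν e^{tQ} | μ) = ∑_{x,y, x≠y} ν(x) Q(x,y) log( ν(y) μ(x) / (ν(x) μ(y)) ) ≤ 0 whenever ν is strictly positive. -/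
open Finset

/-- The entry of the matrix exponential `t ↦ exp(tQ)` has derivative `Q x y` at `t = 0`. -/
theorem exp_entry_hasDerivAt {S : Type*} [Fintype S] [DecidableEq S]
    (Q : Matrix S S ℝ) (x y : S) :
    HasDerivAt (fun t : ℝ => NormedSpace.exp (t • Q) x y) (Q x y) 0 := by
  letI : NormedRing (Matrix S S ℝ) := Matrix.linftyOpNormedRing
  letI : NormedAlgebra ℝ (Matrix S S ℝ) := Matrix.linftyOpNormedAlgebra
  have hE : HasDerivAt (fun t : ℝ => NormedSpace.exp (t • Q)) Q 0 := by
    have h := hasDerivAt_exp_smul_const (𝕂 := ℝ) Q (0 : ℝ)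
    simp only [zero_smul, NormedSpace.exp_zero, one_mul] at h
    exact h
  have hL := (LinearMap.toContinuousLinearMap
      (Matrix.entryLinearMap ℝ ℝ x y : Matrix S S ℝ →ₗ[ℝ] ℝ)).hasFDerivAt
      (x := NormedSpace.exp ((0:ℝ) • Q))
  have h := hL.comp_hasDerivAt 0 hE
  simp at h
  exact h

/-- Entropy production formula and nonpositivity for a finite continuous-time Markov chain
at a strictly positive stationary measure. -/
theorem entropy_loss_nonpos {S : Type*} [Fintype S] [DecidableEq S]
    (Q : Matrix S S ℝ) (hQ_offdiag : ∀ x y, x ≠ y → 0 ≤ Q x y)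
    (hQ_row : ∀ x, ∑ y, Q x y = 0)
    (μ : S → ℝ) (hμ_pos : ∀ x, 0 < μ x) (hμ_sum : ∑ x, μ x = 1)
    (hμ_stat : ∀ y, ∑ x, μ x * Q x y = 0)
    (ν : S → ℝ) (hν_pos : ∀ x, 0 < ν x) (hν_sum : ∑ x, ν x = 1) :
    HasDerivAt
      (fun t : ℝ => ∑ y, (∑ x, ν x * NormedSpace.exp (t • Q) x y) *
        Real.log ((∑ x, ν x * NormedSpace.exp (t • Q) x y) / μ y))
      (∑ x, ∑ y ∈ univ \ {x}, ν x * Q x y * Real.log (ν y * μ x / (ν x * μ y))) 0 ∧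
    (∑ x, ∑ y ∈ univ \ {x}, ν x * Q x y * Real.log (ν y * μ x / (ν x * μ y))) ≤ 0 := by
  have hμ0 : ∀ x, μ x ≠ 0 := fun x => (hμ_pos x).ne'
  have hν0 : ∀ x, ν x ≠ 0 := fun x => (hν_pos x).ne'
  -- the target sum, extended to the full square (diagonal terms vanish)
  have hGfull : (∑ x, ∑ y ∈ univ \ {x}, ν x * Q x y * Real.log (ν y * μ x / (ν x * μ y)))
      = ∑ x, ∑ y, ν x * Q x y * Real.log (ν y * μ x / (ν x * μ y)) := by
    refine Finset.sum_congr rfl fun x _ => ?_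
    rw [Finset.sum_sdiff_eq_sub (Finset.subset_univ _), Finset.sum_singleton,
      div_self (mul_pos (hν_pos x) (hμ_pos x)).ne', Real.log_one, mul_zero, sub_zero]
  -- derivative of the linear part
  have hf : ∀ y : S, HasDerivAt (fun t : ℝ => ∑ x, ν x * NormedSpace.exp (t • Q) x y)
      (∑ x, ν x * Q x y) 0 := fun y =>
    HasDerivAt.fun_sum fun x _ => (exp_entry_hasDerivAt Q x y).const_mul (ν x)
  have hf0 : ∀ y : S, (∑ x, ν x * NormedSpace.exp ((0:ℝ) • Q) x y) = ν y := by
    intro y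
    simp [Matrix.one_apply]
  -- derivative of u ↦ u * log (u / μ y) at ν y
  have hφ : ∀ y : S, HasDerivAt (fun u : ℝ => u * Real.log (u / μ y))
      (Real.log (ν y / μ y) + 1) (ν y) := by
    intro y
    have h1 : HasDerivAt (fun u : ℝ => u / μ y) (1 / μ y) (ν y) :=
      (hasDerivAt_id (ν y)).div_const _
    have h2 : HasDerivAt Real.log (ν y / μ y)⁻¹ (ν y / μ y) :=
      Real.hasDerivAt_log (div_pos (hν_pos y) (hμ_pos y)).ne'
    have h3 : HasDerivAt (fun u : ℝ => Real.log (u / μ y)) ((ν y / μ y)⁻¹ * (1 / μ y)) (ν y) :=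
      by have h := h2.comp (ν y) h1; exact h
    have h4 := (hasDerivAt_id (ν y)).fun_mul h3
    refine h4.congr_deriv ?_
    simp only [id_eq, one_mul]
    have hx : ν y * ((ν y / μ y)⁻¹ * (1 / μ y)) = 1 := by
      rw [inv_div, div_mul_div_comm, mul_one, ← mul_div_assoc]
      exact div_self (mul_pos (hν_pos y) (hμ_pos y)).ne'
    rw [hx]
  -- derivative of each summand
  have hterm : ∀ y : S, HasDerivAt (fun t : ℝ => (∑ x, ν x * NormedSpace.exp (t • Q) x y) *
      Real.log ((∑ x, ν x * NormedSpace.exp (t • Q) x y) / μ y))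
      ((Real.log (ν y / μ y) + 1) * (∑ x, ν x * Q x y)) 0 := by
    intro y
    have h := hφ y
    rw [← hf0 y] at h
    have h2 := h.comp 0 (hf y)
    simp only [Function.comp_def] at h2
    rw [hf0 y] at h2
    exact h2
  have hDer : HasDerivAt
      (fun t : ℝ => ∑ y, (∑ x, ν x * NormedSpace.exp (t • Q) x y) *
        Real.log ((∑ x, ν x * NormedSpace.exp (t • Q) x y) / μ y))
      (∑ y, (Real.log (ν y / μ y) + 1) * (∑ x, ν x * Q x y)) 0 :=
    HasDerivAt.fun_sum fun y _ => hterm y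
  -- ∑_x ∑_y ν x Q x y = 0
  have hB : ∑ x, ∑ y, ν x * Q x y = 0 := by
    refine Finset.sum_eq_zero fun x _ => ?_
    rw [← Finset.mul_sum, hQ_row, mul_zero]
  have hsum0 : ∑ y, ∑ x, ν x * Q x y = 0 := by rw [Finset.sum_comm]; exact hB
  -- the key algebraic identity for the derivative value
  have hkey : (∑ x, ∑ y, ν x * Q x y * Real.log (ν y * μ x / (ν x * μ y)))
      = ∑ y, (Real.log (ν y / μ y) + 1) * (∑ x, ν x * Q x y) := by
    have hsplit : ∀ x y : S, Real.log (ν y * μ x / (ν x * μ y))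
        = Real.log (ν y / μ y) - Real.log (ν x / μ x) := by
      intro x y
      rw [Real.log_div (mul_pos (hν_pos y) (hμ_pos x)).ne' (mul_pos (hν_pos x) (hμ_pos y)).ne',
        Real.log_mul (hν0 y) (hμ0 x), Real.log_mul (hν0 x) (hμ0 y),
        Real.log_div (hν0 y) (hμ0 y), Real.log_div (hν0 x) (hμ0 x)]
      ring
    have h1 : ∀ x : S, ∑ y, ν x * Q x y * Real.log (ν x / μ x) = 0 := by
      intro x
      rw [← Finset.sum_mul, ← Finset.mul_sum, hQ_row, mul_zero, zero_mul]
    calc ∑ x, ∑ y, ν x * Q x y * Real.log (ν y * μ x / (ν x * μ y))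
        = ∑ x, ∑ y, (ν x * Q x y * Real.log (ν y / μ y)
            - ν x * Q x y * Real.log (ν x / μ x)) := by
          refine Finset.sum_congr rfl fun x _ => Finset.sum_congr rfl fun y _ => ?_
          rw [hsplit]; ring
      _ = ∑ x, ∑ y, ν x * Q x y * Real.log (ν y / μ y) := by
          simp_rw [Finset.sum_sub_distrib]
          have hB2 : ∑ x, ∑ y, ν x * Q x y * Real.log (ν x / μ x) = 0 :=
            Finset.sum_eq_zero fun x _ => h1 x
          rw [hB2, sub_zero]
      _ = ∑ y, ∑ x, ν x * Q x y * Real.log (ν y / μ y) := Finset.sum_comm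
      _ = ∑ y, (Real.log (ν y / μ y) + 1) * (∑ x, ν x * Q x y) := by
          simp_rw [← Finset.sum_mul, add_mul, one_mul]
          rw [Finset.sum_add_distrib, hsum0, add_zero]
          exact Finset.sum_congr rfl fun y _ => mul_comm _ _
  -- nonpositivity
  have hbound : ∀ x : S, ∀ y ∈ univ \ ({x} : Finset S),
      ν x * Q x y * Real.log (ν y * μ x / (ν x * μ y)) ≤
      Q x y * (μ x * ν y / μ y) - ν x * Q x y := by
    intro x y hy
    have hxy : y ≠ x := by simpa using (Finset.mem_sdiff.mp hy).2
    have hQxy : 0 ≤ Q x y := hQ_offdiag x y hxy.symm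
    have ha : (0:ℝ) < ν y * μ x / (ν x * μ y) :=
      div_pos (mul_pos (hν_pos y) (hμ_pos x)) (mul_pos (hν_pos x) (hμ_pos y))
    calc ν x * Q x y * Real.log (ν y * μ x / (ν x * μ y))
        ≤ ν x * Q x y * (ν y * μ x / (ν x * μ y) - 1) :=
          mul_le_mul_of_nonneg_left (Real.log_le_sub_one_of_pos ha)
            (mul_nonneg (hν_pos x).le hQxy)
      _ = Q x y * (μ x * ν y / μ y) - ν x * Q x y := by
          rw [mul_sub, mul_one]
          congr 1
          rw [← mul_div_assoc, ← mul_div_assoc,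
            div_eq_div_iff (mul_pos (hν_pos x) (hμ_pos y)).ne' (hμ0 y)]
          ring
  have hS0 : ∑ x, ∑ y ∈ univ \ ({x} : Finset S),
      (Q x y * (μ x * ν y / μ y) - ν x * Q x y) = 0 := by
    have hfull : ∑ x, ∑ y ∈ univ \ ({x} : Finset S),
        (Q x y * (μ x * ν y / μ y) - ν x * Q x y)
        = ∑ x, ∑ y, (Q x y * (μ x * ν y / μ y) - ν x * Q x y) := by
      refine Finset.sum_congr rfl fun x _ => ?_
      rw [Finset.sum_sdiff_eq_sub (Finset.subset_univ _), Finset.sum_singleton]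
      have h0 : Q x x * (μ x * ν x / μ x) - ν x * Q x x = 0 := by
        rw [mul_comm (μ x) (ν x), mul_div_assoc, div_self (hμ0 x), mul_one]
        ring
      rw [h0, sub_zero]
    have hA : ∑ x, ∑ y, Q x y * (μ x * ν y / μ y) = 0 := by
      rw [Finset.sum_comm]
      refine Finset.sum_eq_zero fun y _ => ?_
      have : ∀ x : S, Q x y * (μ x * ν y / μ y) = μ x * Q x y * (ν y / μ y) := fun x => by
        ring
      simp_rw [this, ← Finset.sum_mul, hμ_stat, zero_mul]
    rw [hfull]
    simp_rw [Finset.sum_sub_distrib]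
    rw [hA, hB, sub_zero]
  refine ⟨?_, ?_⟩
  · rw [hGfull, hkey]
    exact hDer
  · calc (∑ x, ∑ y ∈ univ \ {x}, ν x * Q x y * Real.log (ν y * μ x / (ν x * μ y)))
        ≤ ∑ x, ∑ y ∈ univ \ ({x} : Finset S), (Q x y * (μ x * ν y / μ y) - ν x * Q x y) :=
          Finset.sum_le_sum fun x _ => Finset.sum_le_sum (hbound x)
      _ = 0 := hS0
end
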